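/- Let (ζ_i)_{i≥1} be independent {0,1}-valued random variables with P(ζ_i = 1) = 1 − 1/i and P(ζ_i = 0) = 1/i, and let S_n = Σ_{i=1}^n ζ_i. Then for every 0 < a < 1, lim_{n→∞} log P(S_n ≤ a n) / (n log n) = a − 1. -/

import Mathlib

open MeasureTheory ProbabilityTheory Filter Real
open Finset

lemma esymm_step (s : Finset ℕ) (p : ℕ → ℝ) (hp : ∀ i ∈ s, 0 ≤ p i) (k : ℕ) :
    ((k : ℝ) + 1) * ∑ T ∈ s.powersetCard (k + 1), ∏ i ∈ T, p i
      ≤ (∑ i ∈ s, p i) * ∑ T ∈ s.powersetCard k, ∏ i ∈ T, p i := by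
  have key : ((k : ℝ) + 1) * ∑ T ∈ s.powersetCard (k + 1), ∏ i ∈ T, p i
      = ∑ i ∈ s, ∑ T ∈ (s.powersetCard (k + 1)).filter (fun T => i ∈ T),
          p i * ∏ j ∈ T.erase i, p j := by
    rw [Finset.mul_sum]
    rw [← Finset.sum_comm' (t := fun T => T)
      (s' := fun i => (s.powersetCard (k + 1)).filter (fun T => i ∈ T))]
    · refine Finset.sum_congr rfl fun T hT => ?_
      rw [Finset.mem_powersetCard] at hT
      rw [Finset.sum_congr rfl (fun i hi => Finset.mul_prod_erase T p hi)]
      rw [Finset.sum_const, hT.2]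
      ring
    · intro T i
      simp only [Finset.mem_filter, Finset.mem_powersetCard]
      constructor
      · rintro ⟨⟨hTs, hc⟩, hiT⟩
        exact ⟨⟨⟨hTs, hc⟩, hiT⟩, hTs hiT⟩
      · rintro ⟨⟨h1, h2⟩, _⟩
        exact ⟨h1, h2⟩
  rw [key, Finset.sum_mul]
  refine Finset.sum_le_sum fun i hi => ?_
  rw [← Finset.mul_sum]
  refine mul_le_mul_of_nonneg_left ?_ (hp i hi)
  have himg : ∑ T ∈ (s.powersetCard (k + 1)).filter (fun T => i ∈ T), ∏ j ∈ T.erase i, p j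
      = ∑ T' ∈ ((s.powersetCard (k + 1)).filter (fun T => i ∈ T)).image (fun T => T.erase i),
          ∏ j ∈ T', p j :=
    (Finset.sum_image (g := fun T : Finset ℕ => T.erase i) (f := fun T' : Finset ℕ => ∏ j ∈ T', p j) (fun T1 h1 T2 h2 he => by
      have m1 : i ∈ T1 := (Finset.mem_filter.mp h1).2
      have m2 : i ∈ T2 := (Finset.mem_filter.mp h2).2
      exact Finset.erase_injOn' i (by simpa using m1) (by simpa using m2) he)).symm
  rw [himg]
  refine Finset.sum_le_sum_of_subset_of_nonneg ?_ ?_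
  · intro T' hT'
    simp only [Finset.mem_image, Finset.mem_filter, Finset.mem_powersetCard] at hT'
    obtain ⟨T, ⟨⟨hTs, hc⟩, hiT⟩, rfl⟩ := hT'
    rw [Finset.mem_powersetCard]
    exact ⟨(Finset.erase_subset i T).trans hTs, by rw [Finset.card_erase_of_mem hiT, hc]; omega⟩
  · intro T' hT' _
    exact Finset.prod_nonneg fun j hj =>
      hp j ((Finset.mem_powersetCard.mp hT').1 hj)

lemma esymm_le (s : Finset ℕ) (p : ℕ → ℝ) (hp : ∀ i ∈ s, 0 ≤ p i) (k : ℕ) :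
    (k.factorial : ℝ) * ∑ T ∈ s.powersetCard k, ∏ i ∈ T, p i ≤ (∑ i ∈ s, p i) ^ k := by
  induction k with
  | zero => simp
  | succ k ih =>
    have hS : 0 ≤ ∑ i ∈ s, p i := Finset.sum_nonneg hp
    have h1 := esymm_step s p hp k
    calc ((k + 1).factorial : ℝ) * ∑ T ∈ s.powersetCard (k + 1), ∏ i ∈ T, p i
        = (k.factorial : ℝ) * (((k : ℝ) + 1) * ∑ T ∈ s.powersetCard (k + 1), ∏ i ∈ T, p i) := by
          rw [Nat.factorial_succ]; push_cast; ring
      _ ≤ (k.factorial : ℝ) * ((∑ i ∈ s, p i) * ∑ T ∈ s.powersetCard k, ∏ i ∈ T, p i) :=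
          mul_le_mul_of_nonneg_left h1 (by positivity)
      _ = (∑ i ∈ s, p i) * ((k.factorial : ℝ) * ∑ T ∈ s.powersetCard k, ∏ i ∈ T, p i) := by ring
      _ ≤ (∑ i ∈ s, p i) * (∑ i ∈ s, p i) ^ k := mul_le_mul_of_nonneg_left ih hS
      _ = (∑ i ∈ s, p i) ^ (k + 1) := by ring


theorem statement3 {Ω : Type*} [MeasurableSpace Ω] (P : Measure Ω) [IsProbabilityMeasure P]
    (ζ : ℕ → Ω → ℕ)
    (hval : ∀ i ω, ζ i ω ≤ 1)
    (hindep : iIndepFun ζ P)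
    (hone : ∀ i : ℕ, 1 ≤ i → P {ω | ζ i ω = 1} = ENNReal.ofReal (1 - 1 / (i : ℝ)))
    (hzero : ∀ i : ℕ, 1 ≤ i → P {ω | ζ i ω = 0} = ENNReal.ofReal (1 / (i : ℝ)))
    (a : ℝ) (ha : 0 < a) (ha1 : a < 1) :
    Tendsto (fun n : ℕ =>
        Real.log ((P {ω | ((∑ i ∈ Finset.Icc 1 n, ζ i ω : ℕ) : ℝ) ≤ a * n}).toReal) /
          ((n : ℝ) * Real.log n))
      atTop (nhds (a - 1)) := by
  classical
  set m : ℕ → ℕ := fun n => ⌊a * (n : ℝ)⌋₊ with hm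
  set k : ℕ → ℕ := fun n => n - m n with hk
  -- independence product formula
  have hA : ∀ (T : Finset ℕ), (∀ i ∈ T, 1 ≤ i) →
      P (⋂ i ∈ T, {ω | ζ i ω = 0}) = ENNReal.ofReal (∏ i ∈ T, (1 / (i : ℝ))) := by
    intro T hT
    have hmi := hindep.meas_biInter (S := T) (s := fun i => {ω | ζ i ω = 0})
      (fun i _ => ⟨{0}, measurableSet_singleton 0, by ext ω; simp⟩)
    rw [hmi, ENNReal.ofReal_prod_of_nonneg (fun i _ => by positivity)]
    exact Finset.prod_congr rfl fun i hi => hzero i (hT i hi)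
  have hmlt : ∀ n : ℕ, 1 ≤ n → m n < n := by
    intro n hn
    have h1 : (m n : ℝ) ≤ a * n := Nat.floor_le (by positivity)
    have h2 : a * n < n := by
      nlinarith [(Nat.one_le_cast (α := ℝ)).mpr hn]
    exact_mod_cast Nat.cast_lt.mp (lt_of_le_of_lt h1 h2)
  -- lower bound
  have hlow : ∀ n : ℕ, 1 ≤ n →
      ((1 : ℝ) / n) ^ (k n) ≤
        (P {ω | ((∑ i ∈ Finset.Icc 1 n, ζ i ω : ℕ) : ℝ) ≤ a * n}).toReal := by
    intro n hn
    set T : Finset ℕ := Finset.Ioc (m n) n with hT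
    have hsub : (⋂ i ∈ T, {ω | ζ i ω = 0}) ⊆
        {ω | ((∑ i ∈ Finset.Icc 1 n, ζ i ω : ℕ) : ℝ) ≤ a * n} := by
      intro ω hω
      simp only [Set.mem_iInter, Set.mem_setOf_eq] at hω ⊢
      have hsplit : ∑ i ∈ Finset.Icc 1 n, ζ i ω
          = ∑ i ∈ Finset.Ioc 0 (m n), ζ i ω + ∑ i ∈ Finset.Ioc (m n) n, ζ i ω := by
        rw [show Finset.Icc 1 n = Finset.Ioc 0 n by
          ext x; simp only [Finset.mem_Icc, Finset.mem_Ioc]; omega]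
        exact (Finset.sum_Ioc_consecutive _ (Nat.zero_le _) (le_of_lt (hmlt n hn))).symm
      have hz : ∑ i ∈ Finset.Ioc (m n) n, ζ i ω = 0 :=
        Finset.sum_eq_zero fun i hi => hω i hi
      have hb : ∑ i ∈ Finset.Ioc 0 (m n), ζ i ω ≤ m n := by
        calc ∑ i ∈ Finset.Ioc 0 (m n), ζ i ω ≤ ∑ _i ∈ Finset.Ioc 0 (m n), 1 :=
              Finset.sum_le_sum fun i _ => hval i ω
          _ = m n := by simp
      have : ((∑ i ∈ Finset.Icc 1 n, ζ i ω : ℕ) : ℝ) ≤ (m n : ℝ) := by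
        rw [hsplit, hz]
        exact_mod_cast by simpa using hb
      exact this.trans (Nat.floor_le (by positivity))
    have hTmem : ∀ i ∈ T, 1 ≤ i := fun i hi => by
      have := (Finset.mem_Ioc.mp hi).1; omega
    have hmeas : ENNReal.ofReal (∏ i ∈ T, (1 / (i : ℝ)))
        ≤ P {ω | ((∑ i ∈ Finset.Icc 1 n, ζ i ω : ℕ) : ℝ) ≤ a * n} := by
      rw [← hA T hTmem]; exact measure_mono hsub
    have h1 : ((1 : ℝ) / n) ^ (k n) ≤ ∏ i ∈ T, (1 / (i : ℝ)) := by
      have hcard : T.card = k n := by simp [hT, hk]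
      calc ((1 : ℝ) / n) ^ (k n) = ∏ _i ∈ T, ((1 : ℝ) / n) := by
            rw [Finset.prod_const, hcard]
        _ ≤ ∏ i ∈ T, (1 / (i : ℝ)) := by
            refine Finset.prod_le_prod (fun i _ => by positivity) fun i hi => ?_
            have h2 := (Finset.mem_Ioc.mp hi).2
            have hi1 := hTmem i hi
            apply one_div_le_one_div_of_le
            · exact_mod_cast Nat.succ_le_iff.mp hi1
            · exact_mod_cast h2
    calc ((1 : ℝ) / n) ^ (k n) ≤ ∏ i ∈ T, (1 / (i : ℝ)) := h1
      _ = (ENNReal.ofReal (∏ i ∈ T, (1 / (i : ℝ)))).toReal :=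
          (ENNReal.toReal_ofReal (Finset.prod_nonneg fun i _ => by positivity)).symm
      _ ≤ _ := ENNReal.toReal_mono (measure_ne_top P _) hmeas
  -- upper bound
  have hup : ∀ n : ℕ, 1 ≤ n →
      (P {ω | ((∑ i ∈ Finset.Icc 1 n, ζ i ω : ℕ) : ℝ) ≤ a * n}).toReal ≤
        (∑ i ∈ Finset.Icc 1 n, (1 / (i : ℝ))) ^ (k n) / (k n).factorial := by
    intro n hn
    set H : ℝ := ∑ i ∈ Finset.Icc 1 n, (1 / (i : ℝ)) with hH
    set R : ℝ := ∑ T ∈ (Finset.Icc 1 n).powersetCard (k n), ∏ i ∈ T, (1 / (i : ℝ)) with hR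
    have hcover : {ω | ((∑ i ∈ Finset.Icc 1 n, ζ i ω : ℕ) : ℝ) ≤ a * n} ⊆
        ⋃ T ∈ (Finset.Icc 1 n).powersetCard (k n), ⋂ i ∈ T, {ω | ζ i ω = 0} := by
      intro ω hω
      simp only [Set.mem_setOf_eq] at hω
      have hS : ∑ i ∈ Finset.Icc 1 n, ζ i ω ≤ m n := Nat.le_floor hω
      set Z : Finset ℕ := (Finset.Icc 1 n).filter (fun i => ζ i ω = 0) with hZ
      have hcard : k n ≤ Z.card := by
        have hdiff : (Finset.Icc 1 n) \ Z ⊆ (Finset.Icc 1 n) := Finset.sdiff_subset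
        have hone' : ∀ i ∈ (Finset.Icc 1 n) \ Z, ζ i ω = 1 := by
          intro i hi
          rw [Finset.mem_sdiff, hZ, Finset.mem_filter] at hi
          have h0 : ζ i ω ≠ 0 := fun h => hi.2 ⟨hi.1, h⟩
          have := hval i ω
          omega
        have h1 : (Finset.Icc 1 n).card - Z.card ≤ ∑ i ∈ Finset.Icc 1 n, ζ i ω := by
          calc (Finset.Icc 1 n).card - Z.card ≤ ((Finset.Icc 1 n) \ Z).card :=
                Finset.le_card_sdiff Z (Finset.Icc 1 n)
            _ = ∑ i ∈ (Finset.Icc 1 n) \ Z, ζ i ω := by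
                rw [Finset.sum_congr rfl hone']; simp
            _ ≤ ∑ i ∈ Finset.Icc 1 n, ζ i ω :=
                Finset.sum_le_sum_of_subset hdiff
        have hcardIcc : (Finset.Icc 1 n).card = n := by simp
        have hkdef : k n = n - m n := rfl
        omega
      obtain ⟨T, hTZ, hTcard⟩ := Finset.exists_subset_card_eq hcard
      simp only [Set.mem_iUnion, Set.mem_iInter, Set.mem_setOf_eq]
      refine ⟨T, ?_, fun i hi => (Finset.mem_filter.mp (hTZ hi)).2⟩
      rw [Finset.mem_powersetCard]
      exact ⟨hTZ.trans (Finset.filter_subset _ _), hTcard⟩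
    have hTmem : ∀ T ∈ (Finset.Icc 1 n).powersetCard (k n), ∀ i ∈ T, 1 ≤ i := by
      intro T hT i hi
      have := (Finset.mem_powersetCard.mp hT).1 hi
      exact (Finset.mem_Icc.mp this).1
    have hPR : (P {ω | ((∑ i ∈ Finset.Icc 1 n, ζ i ω : ℕ) : ℝ) ≤ a * n}).toReal ≤ R := by
      have h1 : P {ω | ((∑ i ∈ Finset.Icc 1 n, ζ i ω : ℕ) : ℝ) ≤ a * n} ≤
          ENNReal.ofReal R := by
        calc P {ω | ((∑ i ∈ Finset.Icc 1 n, ζ i ω : ℕ) : ℝ) ≤ a * n}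
            ≤ P (⋃ T ∈ (Finset.Icc 1 n).powersetCard (k n), ⋂ i ∈ T, {ω | ζ i ω = 0}) :=
              measure_mono hcover
          _ ≤ ∑ T ∈ (Finset.Icc 1 n).powersetCard (k n), P (⋂ i ∈ T, {ω | ζ i ω = 0}) :=
              measure_biUnion_finset_le _ _
          _ = ∑ T ∈ (Finset.Icc 1 n).powersetCard (k n),
                ENNReal.ofReal (∏ i ∈ T, (1 / (i : ℝ))) :=
              Finset.sum_congr rfl fun T hT => hA T (hTmem T hT)
          _ = ENNReal.ofReal R := by
              rw [hR, ENNReal.ofReal_sum_of_nonneg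
                (fun T _ => Finset.prod_nonneg fun i _ => by positivity)]
      calc (P {ω | ((∑ i ∈ Finset.Icc 1 n, ζ i ω : ℕ) : ℝ) ≤ a * n}).toReal
          ≤ (ENNReal.ofReal R).toReal := ENNReal.toReal_mono ENNReal.ofReal_ne_top h1
        _ ≤ R := le_of_eq (ENNReal.toReal_ofReal
              (Finset.sum_nonneg fun T _ => Finset.prod_nonneg fun i _ => by positivity))
    refine hPR.trans ?_
    have hesymm := esymm_le (Finset.Icc 1 n) (fun i => 1 / (i : ℝ))
      (fun i _ => by positivity) (k n)
    rw [le_div_iff₀ (by positivity : (0:ℝ) < ((k n).factorial : ℝ))]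
    calc R * ((k n).factorial : ℝ) = ((k n).factorial : ℝ) * R := by ring
      _ ≤ H ^ (k n) := hesymm
  -- analysis part
  have hcast : Tendsto (fun n : ℕ => (n : ℝ)) atTop atTop := tendsto_natCast_atTop_atTop
  have hlogatTop : Tendsto (fun n : ℕ => Real.log n) atTop atTop :=
    Real.tendsto_log_atTop.comp hcast
  have hfloor : Tendsto (fun n : ℕ => (m n : ℝ) / n) atTop (nhds a) :=
    (tendsto_nat_floor_mul_div_atTop ha.le).comp hcast
  have hL : Tendsto (fun n : ℕ => (m n : ℝ) / n - 1) atTop (nhds (a - 1)) :=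
    hfloor.sub_const 1
  have hkn : Tendsto (fun n : ℕ => (k n : ℝ) / n) atTop (nhds (1 - a)) := by
    have h1 : Tendsto (fun n : ℕ => 1 - (m n : ℝ) / n) atTop (nhds (1 - a)) :=
      hfloor.const_sub 1
    refine h1.congr' ?_
    filter_upwards [eventually_ge_atTop 1] with n hn
    have hmn := (hmlt n hn).le
    have hn0 : (n : ℝ) ≠ 0 := by positivity
    have hkc : (k n : ℝ) = (n : ℝ) - (m n : ℝ) := by
      have h : k n = n - m n := rfl
      rw [h, Nat.cast_sub hmn]
    rw [hkc]
    field_simp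
  have hg0 : Tendsto (fun x : ℝ => Real.log (1 + x) / x) atTop (nhds 0) := by
    have h1 : Tendsto (fun x : ℝ => Real.log (1 + x) / (1 + x)) atTop (nhds 0) := by
      have hadd : Tendsto (fun x : ℝ => 1 + x) atTop atTop :=
        tendsto_atTop_add_const_left atTop (1 : ℝ) tendsto_id
      exact
        Real.isLittleO_log_id_atTop.tendsto_div_nhds_zero.comp hadd
    have h2 : Tendsto (fun x : ℝ => (1 + x) / x) atTop (nhds 1) := by
      have h3 : Tendsto (fun x : ℝ => x⁻¹ + 1) atTop (nhds 1) := by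
        simpa using tendsto_inv_atTop_zero.add_const (1 : ℝ)
      refine h3.congr' ?_
      filter_upwards [eventually_ge_atTop (1 : ℝ)] with x hx
      have hx0 : x ≠ 0 := by linarith
      rw [add_div, div_self hx0, one_div]
    have h4 := h1.mul h2
    rw [zero_mul] at h4
    refine h4.congr' ?_
    filter_upwards [eventually_ge_atTop (1 : ℝ)] with x hx
    have hx0 : x ≠ 0 := by linarith
    have hx1 : (1 : ℝ) + x ≠ 0 := by linarith
    field_simp
  have hlog1 : Tendsto (fun n : ℕ => (Real.log (1 + Real.log n) + 1) / Real.log n)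
      atTop (nhds 0) := by
    have h1 := hg0.comp hlogatTop
    have h2 := tendsto_inv_atTop_zero.comp hlogatTop
    have h3 := h1.add h2
    rw [add_zero] at h3
    refine h3.congr fun n => ?_
    simp only [Function.comp]
    rw [add_div, one_div]
  have hlogk : Tendsto (fun n : ℕ => Real.log (k n) / Real.log n) atTop (nhds 1) := by
    have h1 : Tendsto (fun n : ℕ => Real.log ((k n : ℝ) / n)) atTop
        (nhds (Real.log (1 - a))) := hkn.log (by linarith)
    have h2 := (h1.div_atTop hlogatTop).add_const (1 : ℝ)
    rw [zero_add] at h2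
    refine h2.congr' ?_
    filter_upwards [eventually_ge_atTop 3] with n hn
    have hn1 : 1 ≤ n := by omega
    have hnR : (1 : ℝ) < n := by exact_mod_cast (by omega : 1 < n)
    have hn0 : (n : ℝ) ≠ 0 := by positivity
    have hlogn : (0 : ℝ) < Real.log n := Real.log_pos hnR
    have hk1 : 1 ≤ k n := by
      have h : k n = n - m n := rfl
      have := hmlt n hn1
      omega
    have hk0 : (k n : ℝ) ≠ 0 := by
      have : (0 : ℝ) < k n := by exact_mod_cast hk1
      exact this.ne'
    rw [Real.log_div hk0 hn0, sub_div, div_self hlogn.ne']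
    ring
  have hU : Tendsto (fun n : ℕ => ((k n : ℝ) / n) *
      ((Real.log (1 + Real.log n) + 1) / Real.log n - Real.log (k n) / Real.log n))
      atTop (nhds (a - 1)) := by
    have h := hkn.mul (hlog1.sub hlogk)
    have he : (1 - a) * (0 - 1) = a - 1 := by ring
    rwa [he] at h
  refine tendsto_of_tendsto_of_tendsto_of_le_of_le' hL hU ?_ ?_
  · -- lower bound
    filter_upwards [eventually_ge_atTop 3] with n hn
    have hn1 : 1 ≤ n := by omega
    have hnR : (1 : ℝ) < n := by exact_mod_cast (by omega : 1 < n)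
    have hnpos : (0 : ℝ) < n := by linarith
    have hlogn : (0 : ℝ) < Real.log n := Real.log_pos hnR
    have hmn := (hmlt n hn1).le
    have hkc : (k n : ℝ) = (n : ℝ) - (m n : ℝ) := by
      have h : k n = n - m n := rfl
      rw [h, Nat.cast_sub hmn]
    have hPlow := hlow n hn1
    have hlogle : -(k n : ℝ) * Real.log n ≤
        Real.log ((P {ω | ((∑ i ∈ Finset.Icc 1 n, ζ i ω : ℕ) : ℝ) ≤ a * n}).toReal) := by
      have h := Real.log_le_log (by positivity) hPlow
      rw [Real.log_pow, one_div, Real.log_inv] at h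
      linarith
    calc (m n : ℝ) / n - 1 = (-(k n : ℝ) * Real.log n) / ((n : ℝ) * Real.log n) := by
          rw [hkc]; field_simp; ring
      _ ≤ _ := by gcongr
  · -- upper bound
    filter_upwards [eventually_ge_atTop 3] with n hn
    have hn1 : 1 ≤ n := by omega
    have hnR : (1 : ℝ) < n := by exact_mod_cast (by omega : 1 < n)
    have hnpos : (0 : ℝ) < n := by linarith
    have hlogn : (0 : ℝ) < Real.log n := Real.log_pos hnR
    have hk1 : 1 ≤ k n := by
      have h : k n = n - m n := rfl
      have := hmlt n hn1
      omega
    have hkpos : (0 : ℝ) < k n := by exact_mod_cast hk1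
    have hPlow := hlow n hn1
    have hPpos : 0 < (P {ω | ((∑ i ∈ Finset.Icc 1 n, ζ i ω : ℕ) : ℝ) ≤ a * n}).toReal :=
      lt_of_lt_of_le (by positivity) hPlow
    have hPup := hup n hn1
    have hHpos : (0 : ℝ) < ∑ i ∈ Finset.Icc 1 n, (1 / (i : ℝ)) := by
      refine Finset.sum_pos (fun i hi => ?_) ⟨1, by simp [hn1]⟩
      have h1 : 1 ≤ i := (Finset.mem_Icc.mp hi).1
      have : (0 : ℝ) < i := by exact_mod_cast h1
      positivity
    have hH : ∑ i ∈ Finset.Icc 1 n, (1 / (i : ℝ)) ≤ 1 + Real.log n := by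
      have h := harmonic_le_one_add_log n
      rw [harmonic_eq_sum_Icc] at h
      push_cast at h
      simpa [one_div] using h
    have hfacpos : (0 : ℝ) < (k n).factorial := by exact_mod_cast (k n).factorial_pos
    have hlogfac : (k n : ℝ) * Real.log (k n) - (k n : ℝ) ≤
        Real.log ((k n).factorial) := by
      have h := Real.pow_div_factorial_le_exp (x := (k n : ℝ)) (by positivity) (k n)
      have h2 : ((k n : ℝ)) ^ (k n) ≤ ((k n).factorial : ℝ) * Real.exp (k n) := by
        rw [div_le_iff₀ hfacpos] at h
        linarith
      have h3 := Real.log_le_log (by positivity) h2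
      rw [Real.log_pow, Real.log_mul hfacpos.ne' (Real.exp_ne_zero _), Real.log_exp] at h3
      linarith
    have hnum : Real.log ((P {ω | ((∑ i ∈ Finset.Icc 1 n, ζ i ω : ℕ) : ℝ) ≤ a * n}).toReal) ≤
        (k n : ℝ) * Real.log (1 + Real.log n) - ((k n : ℝ) * Real.log (k n) - (k n : ℝ)) := by
      have l1 := Real.log_le_log hPpos hPup
      have l2 : Real.log ((∑ i ∈ Finset.Icc 1 n, (1 / (i : ℝ))) ^ (k n) / (k n).factorial)
          = (k n : ℝ) * Real.log (∑ i ∈ Finset.Icc 1 n, (1 / (i : ℝ)))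
            - Real.log ((k n).factorial) := by
        rw [Real.log_div (by positivity) hfacpos.ne', Real.log_pow]
      have l3 := Real.log_le_log hHpos hH
      have l4 : (k n : ℝ) * Real.log (∑ i ∈ Finset.Icc 1 n, (1 / (i : ℝ)))
          ≤ (k n : ℝ) * Real.log (1 + Real.log n) :=
        mul_le_mul_of_nonneg_left l3 (by positivity)
      rw [l2] at l1
      linarith
    calc Real.log ((P {ω | ((∑ i ∈ Finset.Icc 1 n, ζ i ω : ℕ) : ℝ) ≤ a * n}).toReal) /
          ((n : ℝ) * Real.log n)
        ≤ ((k n : ℝ) * Real.log (1 + Real.log n)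
            - ((k n : ℝ) * Real.log (k n) - (k n : ℝ))) / ((n : ℝ) * Real.log n) := by
          gcongr
      _ = ((k n : ℝ) / n) *
          ((Real.log (1 + Real.log n) + 1) / Real.log n - Real.log (k n) / Real.log n) := by
          field_simp
          ring
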